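/- arXiv:1410.8527 — 2 statements merged into one kernel-verified Lean document; each statement's English description precedes it below -/
import Mathlib

section
/- With v_0 = v_0(r) > 0 and Ψ := -h_1 - U_1 - v_0 A_φ + 2 r^2 v_0^2 h_0 - (3/2) h_0^2 - 4 h_0 U_0 - 2 U_0^2 - ∫^r s^3 v_0(s)^4 ds, the pair of 1PN equations ∂_z Ψ = 0 and ∂_r Ψ + 2 r v_0 v_1 + A_φ ∂_r v_0 - 2 r^2 (∂_r v_0^2) h_0 = 0 is equivalent, given the Newtonian Euler equations ∂_z h_0 = -∂_z U_0 and ∂_r h_0 - r v_0^2 = -∂_r U_0, to the 1PN Euler equations: -∂_z h_1 - ∂_z U_1 - v_0 ∂_z A_φ - (h_0 + 2 r^2 v_0^2) ∂_z U_0 = 0 and -∂_r h_1 - ∂_r U_1 + 2 r v_0 v_1 - v_0 ∂_r A_φ + r^3 v_0^4 + r v_0^2 h_0 - 4 r v_0^2 U_0 - (h_0 + 2 r^2 v_0^2) ∂_r U_0 = 0. -/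
noncomputable def pr (f : ℝ × ℝ → ℝ) (p : ℝ × ℝ) : ℝ := fderiv ℝ f p (1, 0)
noncomputable def pz (f : ℝ × ℝ → ℝ) (p : ℝ × ℝ) : ℝ := fderiv ℝ f p (0, 1)

/-- with
`Ψ = -h₁ - U₁ - v₀ A_φ + 2 r² v₀² h₀ - (3/2) h₀² - 4 h₀ U₀ - 2 U₀² - ∫^r s³ v₀(s)⁴ ds`,
the pair `∂_z Ψ = 0`, `∂_r Ψ + 2 r v₀ v₁ + A_φ ∂_r v₀ - 2 r² (∂_r v₀²) h₀ = 0`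
is equivalent, given the Newtonian Euler equations, to the 1PN Euler equations. -/
theorem psi_equations_equivalent_to_1PN_euler
    (v0 : ℝ → ℝ) (h0 h1 U0 U1 Aφ v1 : ℝ × ℝ → ℝ) (F : ℝ → ℝ)
    (hv0 : ContDiff ℝ 1 v0) (hh0 : ContDiff ℝ 1 h0) (hh1 : ContDiff ℝ 1 h1)
    (hU0 : ContDiff ℝ 1 U0) (hU1 : ContDiff ℝ 1 U1) (hAφ : ContDiff ℝ 1 Aφ)
    (hF : ∀ r : ℝ, 0 < r → HasDerivAt F (r ^ 3 * (v0 r) ^ 4) r)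
    (hv0pos : ∀ r : ℝ, 0 < r → 0 < v0 r)
    (Ψ : ℝ × ℝ → ℝ)
    (hΨ : ∀ p : ℝ × ℝ, Ψ p =
      -h1 p - U1 p - v0 p.1 * Aφ p + 2 * p.1 ^ 2 * (v0 p.1) ^ 2 * h0 p
        - 3 / 2 * (h0 p) ^ 2 - 4 * h0 p * U0 p - 2 * (U0 p) ^ 2 - F p.1) :
    ∀ p : ℝ × ℝ, 0 < p.1 →
      -- Newtonian Euler equations at `p`:
      pz h0 p = -pz U0 p →
      pr h0 p - p.1 * (v0 p.1) ^ 2 = -pr U0 p →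
      -- equivalence of the `Ψ`-form with the 1PN Euler equations:
      ((pz Ψ p = 0 ∧
          pr Ψ p + 2 * p.1 * v0 p.1 * v1 p + Aφ p * deriv v0 p.1
            - 2 * p.1 ^ 2 * deriv (fun s => (v0 s) ^ 2) p.1 * h0 p = 0)
        ↔
        ((-pz h1 p - pz U1 p - v0 p.1 * pz Aφ p
            - (h0 p + 2 * p.1 ^ 2 * (v0 p.1) ^ 2) * pz U0 p = 0) ∧
          (-pr h1 p - pr U1 p + 2 * p.1 * v0 p.1 * v1 p - v0 p.1 * pr Aφ p
            + p.1 ^ 3 * (v0 p.1) ^ 4 + p.1 * (v0 p.1) ^ 2 * h0 p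
            - 4 * p.1 * (v0 p.1) ^ 2 * U0 p
            - (h0 p + 2 * p.1 ^ 2 * (v0 p.1) ^ 2) * pr U0 p = 0))) := by
  intro p hp hN1 hN2
  have hΨ' : Ψ = fun q : ℝ × ℝ =>
      -h1 q - U1 q - v0 q.1 * Aφ q + 2 * (q.1 * q.1) * (v0 q.1 * v0 q.1) * h0 q
        - 3 / 2 * (h0 q * h0 q) - 4 * (h0 q * U0 q) - 2 * (U0 q * U0 q) - F q.1 := by
    funext q; rw [hΨ]; ring
  subst hΨ'
  simp only [pr, pz] at hN1 hN2 ⊢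
  have Hh0 : HasFDerivAt h0 (fderiv ℝ h0 p) p := (hh0.differentiable one_ne_zero p).hasFDerivAt
  have Hh1 : HasFDerivAt h1 (fderiv ℝ h1 p) p := (hh1.differentiable one_ne_zero p).hasFDerivAt
  have HU0 : HasFDerivAt U0 (fderiv ℝ U0 p) p := (hU0.differentiable one_ne_zero p).hasFDerivAt
  have HU1 : HasFDerivAt U1 (fderiv ℝ U1 p) p := (hU1.differentiable one_ne_zero p).hasFDerivAt
  have HAφ : HasFDerivAt Aφ (fderiv ℝ Aφ p) p := (hAφ.differentiable one_ne_zero p).hasFDerivAt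
  have Hfst : HasFDerivAt (fun q : ℝ × ℝ => q.1) (ContinuousLinearMap.fst ℝ ℝ ℝ) p :=
    hasFDerivAt_fst
  have HV : HasFDerivAt (fun q : ℝ × ℝ => v0 q.1)
      (deriv v0 p.1 • ContinuousLinearMap.fst ℝ ℝ ℝ) p :=
    ((hv0.differentiable one_ne_zero p.1).hasDerivAt).comp_hasFDerivAt p Hfst
  have HF' : HasFDerivAt (fun q : ℝ × ℝ => F q.1)
      ((p.1 ^ 3 * (v0 p.1) ^ 4) • ContinuousLinearMap.fst ℝ ℝ ℝ) p :=
    (hF p.1 hp).comp_hasFDerivAt p Hfst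
  have HΨ := ((((((Hh1.neg.sub HU1).sub (HV.mul HAφ)).add
      ((((Hfst.mul Hfst).const_mul 2).mul (HV.mul HV)).mul Hh0)).sub
      ((Hh0.mul Hh0).const_mul (3/2))).sub ((Hh0.mul HU0).const_mul 4)).sub
      ((HU0.mul HU0).const_mul 2)).sub HF'
  have hdv2 : deriv (fun s => v0 s ^ 2) p.1 = 2 * v0 p.1 * deriv v0 p.1 := by
    have := (((hv0.differentiable one_ne_zero p.1).hasDerivAt).pow 2).deriv
    simpa [Pi.pow_def] using this
  have e1 : fderiv ℝ (fun q : ℝ × ℝ =>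
      -h1 q - U1 q - v0 q.1 * Aφ q + 2 * (q.1 * q.1) * (v0 q.1 * v0 q.1) * h0 q
        - 3 / 2 * (h0 q * h0 q) - 4 * (h0 q * U0 q) - 2 * (U0 q * U0 q) - F q.1) p (0, 1)
      = -fderiv ℝ h1 p (0,1) - fderiv ℝ U1 p (0,1) - v0 p.1 * fderiv ℝ Aφ p (0,1)
        + 2 * p.1 ^ 2 * (v0 p.1) ^ 2 * fderiv ℝ h0 p (0,1)
        - 3 * h0 p * fderiv ℝ h0 p (0,1)
        - 4 * (fderiv ℝ h0 p (0,1) * U0 p + h0 p * fderiv ℝ U0 p (0,1))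
        - 4 * U0 p * fderiv ℝ U0 p (0,1) := by
    erw [HΨ.fderiv]
    simp [ContinuousLinearMap.add_apply, ContinuousLinearMap.sub_apply,
      ContinuousLinearMap.neg_apply, ContinuousLinearMap.smul_apply,
      ContinuousLinearMap.coe_smul', Pi.smul_apply, smul_eq_mul]
    ring
  have e2 : fderiv ℝ (fun q : ℝ × ℝ =>
      -h1 q - U1 q - v0 q.1 * Aφ q + 2 * (q.1 * q.1) * (v0 q.1 * v0 q.1) * h0 q
        - 3 / 2 * (h0 q * h0 q) - 4 * (h0 q * U0 q) - 2 * (U0 q * U0 q) - F q.1) p (1, 0)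
      = -fderiv ℝ h1 p (1,0) - fderiv ℝ U1 p (1,0)
        - deriv v0 p.1 * Aφ p - v0 p.1 * fderiv ℝ Aφ p (1,0)
        + 4 * p.1 * (v0 p.1) ^ 2 * h0 p
        + 4 * p.1 ^ 2 * v0 p.1 * deriv v0 p.1 * h0 p
        + 2 * p.1 ^ 2 * (v0 p.1) ^ 2 * fderiv ℝ h0 p (1,0)
        - 3 * h0 p * fderiv ℝ h0 p (1,0)
        - 4 * (fderiv ℝ h0 p (1,0) * U0 p + h0 p * fderiv ℝ U0 p (1,0))
        - 4 * U0 p * fderiv ℝ U0 p (1,0)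
        - p.1 ^ 3 * (v0 p.1) ^ 4 := by
    erw [HΨ.fderiv]
    simp [ContinuousLinearMap.add_apply, ContinuousLinearMap.sub_apply,
      ContinuousLinearMap.neg_apply, ContinuousLinearMap.smul_apply,
      ContinuousLinearMap.coe_smul', Pi.smul_apply, smul_eq_mul]
    ring
  rw [e1, e2, hdv2]
  constructor
  · rintro ⟨a, b⟩
    constructor
    · linear_combination a - (2 * p.1 ^ 2 * (v0 p.1) ^ 2 - 3 * h0 p - 4 * U0 p) * hN1
    · linear_combination b - (2 * p.1 ^ 2 * (v0 p.1) ^ 2 - 3 * h0 p - 4 * U0 p) * hN2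
  · rintro ⟨a, b⟩
    constructor
    · linear_combination a + (2 * p.1 ^ 2 * (v0 p.1) ^ 2 - 3 * h0 p - 4 * U0 p) * hN1
    · linear_combination b + (2 * p.1 ^ 2 * (v0 p.1) ^ 2 - 3 * h0 p - 4 * U0 p) * hN2
end

section
/- Let A: R^3 → R be a C^2 axially symmetric function (A = A_φ(r,z)) satisfying ΔA - (2/r) ∂_r A = -16π G r^2 ρ_0 v_0 on R^3, with ρ_0 ≥ 0, v_0 ≥ 0 continuous of compact support, and A(x) → 0 as |x| → ∞. Then A ≥ 0 everywhere. -/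
noncomputable def prr (f : ℝ × ℝ → ℝ) (p : ℝ × ℝ) : ℝ := pr (pr f) p
noncomputable def pzz (f : ℝ × ℝ → ℝ) (p : ℝ × ℝ) : ℝ := pz (pz f) p

open Filter Set

lemma aux_1d (φ ψ : ℝ → ℝ) (c : ℝ) (hφ : ∀ t, HasDerivAt φ (ψ t) t)
    (hψ : HasDerivAt ψ c 0) (hmin : IsLocalMin φ 0) : 0 ≤ c := by
  by_contra hc
  push_neg at hc
  have hψ0 : ψ 0 = 0 := by
    have h := hmin.deriv_eq_zero
    rwa [(hφ 0).deriv] at h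
  have hslope := hasDerivAt_iff_tendsto_slope.mp hψ
  have h1 : ∀ᶠ t in nhdsWithin (0:ℝ) {(0:ℝ)}ᶜ, slope ψ 0 t < 0 := hslope (Iio_mem_nhds hc)
  have h2 : ∀ᶠ t in nhdsWithin (0:ℝ) (Set.Ioi 0), slope ψ 0 t < 0 :=
    h1.filter_mono (nhdsWithin_mono 0 (fun t ht => ne_of_gt ht))
  have h3 : ∀ᶠ t in nhdsWithin (0:ℝ) (Set.Ioi 0), φ 0 ≤ φ t :=
    hmin.filter_mono nhdsWithin_le_nhds
  have h4 : ∀ᶠ t in nhdsWithin (0:ℝ) (Set.Ioi 0),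
      slope ψ 0 t < 0 ∧ φ 0 ≤ φ t := h2.and h3
  obtain ⟨u, hu, hsub⟩ := mem_nhdsGT_iff_exists_Ioo_subset.mp h4
  set b := u / 2 with hb
  have hbu : b ∈ Set.Ioo (0:ℝ) u :=
    ⟨by have := hu.out; positivity, by rw [hb]; linarith [hu.out]⟩
  have hψneg : ∀ t ∈ Set.Ioo (0:ℝ) b, ψ t < 0 := by
    intro t ht
    have htu : t ∈ Set.Ioo (0:ℝ) u := ⟨ht.1, lt_trans ht.2 hbu.2⟩
    have hs := (hsub htu).1
    have : slope ψ 0 t = ψ t / t := by simp [slope_def_field, hψ0]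
    rw [this] at hs
    rcases div_neg_iff.mp hs with h | h
    · linarith [ht.1, h.2]
    · exact h.1
  have hanti : StrictAntiOn φ (Set.Icc 0 b) := by
    apply strictAntiOn_of_deriv_neg (convex_Icc 0 b)
    · exact fun t _ => ((hφ t).differentiableAt).continuousAt.continuousWithinAt
    · intro t ht
      rw [interior_Icc] at ht
      rw [(hφ t).deriv]
      exact hψneg t ht
  have hlt : φ b < φ 0 := hanti (Set.left_mem_Icc.mpr (le_of_lt hbu.1))
    (Set.mem_Icc.mpr ⟨hbu.1.le, le_rfl⟩) hbu.1
  have hge : φ 0 ≤ φ b := (hsub hbu).2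
  linarith

lemma aux_2nd (F : ℝ × ℝ → ℝ) (hF : ContDiff ℝ 2 F)
    (q v : ℝ × ℝ) (hmin : IsLocalMin F q) :
    0 ≤ fderiv ℝ (fun p => fderiv ℝ F p v) q v := by
  have hdF : ContDiff ℝ 1 (fun p => fderiv ℝ F p v) :=
    (hF.fderiv_right (by norm_num)).clm_apply contDiff_const
  set ℓ : ℝ → ℝ × ℝ := fun t => q + t • v with hℓdef
  have hℓ : ∀ t, HasDerivAt ℓ v t := fun t => by
    simpa [hℓdef] using ((hasDerivAt_id t).smul_const v).const_add q
  have hℓ0 : ℓ 0 = q := by simp [hℓdef]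
  have hφ : ∀ t, HasDerivAt (fun s => F (ℓ s)) (fderiv ℝ F (ℓ t) v) t := fun t =>
    HasFDerivAt.comp_hasDerivAt t ((hF.differentiable (by norm_num) (ℓ t)).hasFDerivAt) (hℓ t)
  have hψ : HasDerivAt (fun s => fderiv ℝ F (ℓ s) v)
      (fderiv ℝ (fun p => fderiv ℝ F p v) q v) 0 := by
    have hd : HasFDerivAt (fun p => fderiv ℝ F p v)
        (fderiv ℝ (fun p => fderiv ℝ F p v) q) (ℓ 0) := by
      rw [hℓ0]
      exact ((hdF.differentiable one_ne_zero) q).hasFDerivAt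
    exact HasFDerivAt.comp_hasDerivAt 0 hd (hℓ 0)
  have hminφ : IsLocalMin (fun s => F (ℓ s)) 0 := by
    have hcont : Filter.Tendsto ℓ (nhds 0) (nhds q) := by
      simpa [hℓ0] using (hℓ 0).continuousAt.tendsto
    have h := hcont.eventually hmin
    simpa [IsLocalMin, IsMinFilter, hℓ0] using h
  exact aux_1d _ _ _ hφ hψ hminφ

lemma hasFDerivAt_cube (c : ℝ) (p : ℝ × ℝ) :
    HasFDerivAt (fun q : ℝ × ℝ => c * q.1 ^ 3)
      (c • ((3 * p.1 ^ 2 : ℝ) • ContinuousLinearMap.fst ℝ ℝ ℝ)) p := by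
  have h := HasDerivAt.comp_hasFDerivAt (𝕜 := ℝ) p (hasDerivAt_pow 3 p.1) hasFDerivAt_fst
  have h2 := h.const_mul c
  exact h2.congr_fderiv (by norm_num)

lemma hasFDerivAt_sq (c : ℝ) (p : ℝ × ℝ) :
    HasFDerivAt (fun q : ℝ × ℝ => c * q.1 ^ 2)
      (c • ((2 * p.1 : ℝ) • ContinuousLinearMap.fst ℝ ℝ ℝ)) p := by
  have h := HasDerivAt.comp_hasFDerivAt (𝕜 := ℝ) p (hasDerivAt_pow 2 p.1) hasFDerivAt_fst
  have h2 := h.const_mul c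
  exact h2.congr_fderiv (by norm_num)

lemma pr_sub_cube (A : ℝ × ℝ → ℝ) (hA : Differentiable ℝ A) (ε : ℝ) (p : ℝ × ℝ) :
    pr (fun q => A q - ε * q.1 ^ 3) p = pr A p - ε * 3 * p.1 ^ 2 := by
  unfold pr
  rw [fderiv_fun_sub (hA p) (hasFDerivAt_cube ε p).differentiableAt,
    (hasFDerivAt_cube ε p).fderiv]
  simp
  ring

lemma pz_sub_cube (A : ℝ × ℝ → ℝ) (hA : Differentiable ℝ A) (ε : ℝ) (p : ℝ × ℝ) :
    pz (fun q => A q - ε * q.1 ^ 3) p = pz A p := by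
  unfold pz
  rw [fderiv_fun_sub (hA p) (hasFDerivAt_cube ε p).differentiableAt,
    (hasFDerivAt_cube ε p).fderiv]
  simp

/-- an axially symmetric `C²` potential `A = A_φ(r,z)` solving
`ΔA - (2/r) ∂_r A = -16 π G r² ρ₀ v₀` (flat Laplacian
`Δ = ∂_r² + (1/r)∂_r + ∂_z²` on axially symmetric functions), with `ρ₀ ≥ 0`,
`v₀ ≥ 0` continuous of compact support, `A` vanishing on the axis (regularity of
the 1-form `A_φ dφ` on `ℝ³`) and at infinity, is nonnegative. -/
theorem gravitomagnetic_potential_nonneg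
    (G : ℝ) (hG : 0 < G)
    (A ρ0 v0 : ℝ × ℝ → ℝ)
    (hA : ContDiff ℝ 2 A)
    (hρ0cont : Continuous ρ0) (hv0cont : Continuous v0)
    (hρ0 : ∀ p, 0 ≤ ρ0 p) (hv0 : ∀ p, 0 ≤ v0 p)
    (hsupp : HasCompactSupport fun p => ρ0 p * v0 p)
    (haxis : ∀ z : ℝ, A (0, z) = 0)
    (hdecay : Filter.Tendsto A (Filter.cocompact (ℝ × ℝ)) (nhds 0))
    (heq : ∀ p : ℝ × ℝ, 0 < p.1 →
      (prr A p + (1 / p.1) * pr A p + pzz A p) - (2 / p.1) * pr A p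
        = -16 * Real.pi * G * p.1 ^ 2 * ρ0 p * v0 p) :
    ∀ p : ℝ × ℝ, 0 ≤ p.1 → 0 ≤ A p := by
  intro p hp
  by_contra hneg
  push_neg at hneg
  have hAdiff : Differentiable ℝ A := hA.differentiable (by norm_num)
  -- p is not on the axis
  have hp1 : 0 < p.1 := by
    rcases eq_or_lt_of_le hp with h0 | h; swap
    · exact h
    · exfalso
      have hpz : p = (0, p.2) := by ext <;> simp [← h0]
      rw [hpz, haxis p.2] at hneg
      exact lt_irrefl 0 hneg
  set m := A p with hm
  have hm0 : m < 0 := hneg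
  -- from decay: outside a compact set, |A| < -m/2
  have hball : A ⁻¹' (Metric.ball 0 (-m / 2)) ∈ Filter.cocompact (ℝ × ℝ) :=
    hdecay (Metric.ball_mem_nhds 0 (by linarith))
  obtain ⟨K0, hK0c, hK0sub⟩ := Filter.mem_cocompact.mp hball
  obtain ⟨r0, hr0⟩ := (hK0c.isBounded.insert p).subset_closedBall 0
  set R := max r0 0 + 1 with hRdef
  have hR1 : (1:ℝ) ≤ R := by rw [hRdef]; have := le_max_right r0 0; linarith
  have hRpos : (0:ℝ) < R := by linarith
  have hsubball : insert p K0 ⊆ Metric.ball 0 R := by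
    refine hr0.trans (Metric.closedBall_subset_ball ?_)
    have := le_max_left r0 0
    rw [hRdef]; linarith
  set ε := (-m) / (8 * R ^ 3) with hεdef
  have hR3pos : (0:ℝ) < R ^ 3 := by positivity
  have hε : 0 < ε := by
    rw [hεdef]; apply div_pos (by linarith) (by positivity)
  have hεR : ε * R ^ 3 ≤ -m / 4 := by
    have h8 : ε * R ^ 3 = -m / 8 := by
      rw [hεdef]
      field_simp
    rw [h8]
    linarith
  clear_value m R ε
  set B : ℝ × ℝ → ℝ := fun q => A q - ε * q.1 ^ 3 with hBdef
  have hBcd : ContDiff ℝ 2 B := hA.sub (contDiff_const.mul (contDiff_fst.pow 3))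
  have hBcont : Continuous B := hBcd.continuous
  set K : Set (ℝ × ℝ) := {q | 0 ≤ q.1} ∩ Metric.closedBall 0 R with hKdef
  have hKclosed : IsClosed K :=
    (isClosed_le continuous_const continuous_fst).inter Metric.isClosed_closedBall
  have hKcomp : IsCompact K :=
    (isCompact_closedBall (0 : ℝ × ℝ) R).of_isClosed_subset hKclosed Set.inter_subset_right
  have hpK : p ∈ K := ⟨hp, Metric.ball_subset_closedBall (hsubball (Set.mem_insert p K0))⟩
  obtain ⟨q, hqK, hqmin⟩ := hKcomp.exists_isMinOn ⟨p, hpK⟩ hBcont.continuousOn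
  have hBqle : B q ≤ m - ε * p.1 ^ 3 := by
    rw [hm]
    exact hqmin hpK
  have hBqm : B q < m := by
    have : 0 < ε * p.1 ^ 3 := by positivity
    linarith
  clear_value B
  rcases eq_or_lt_of_le (show (0:ℝ) ≤ q.1 from hqK.1) with h0 | hq1pos
  · -- on the axis: B q = 0, contradiction
    have hqz : q = (0, q.2) := by ext <;> simp [← h0]
    have : B q = 0 := by
      rw [hBdef]; simp only
      rw [hqz, haxis q.2]; simp
    linarith
  have hqle : ‖q‖ ≤ R := mem_closedBall_zero_iff.mp hqK.2
  rcases lt_or_eq_of_le hqle with hlt | heqR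
  · -- interior minimum: contradiction with the PDE
    have hKnhds : K ∈ nhds q := by
      have hUopen : IsOpen ({q' : ℝ × ℝ | 0 < q'.1} ∩ Metric.ball 0 R) :=
        (isOpen_lt continuous_const continuous_fst).inter Metric.isOpen_ball
      have hqU : q ∈ {q' : ℝ × ℝ | 0 < q'.1} ∩ Metric.ball 0 R :=
        ⟨hq1pos, mem_ball_zero_iff.mpr hlt⟩
      exact Filter.mem_of_superset (hUopen.mem_nhds hqU)
        (fun x hx => ⟨(show (0:ℝ) < x.1 from hx.1).le, Metric.ball_subset_closedBall hx.2⟩)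
    have hlocmin : IsLocalMin B q := hqmin.isLocalMin hKnhds
    have hfd : fderiv ℝ B q = 0 := hlocmin.fderiv_eq_zero
    have hprB0 : pr B q = 0 := by unfold pr; rw [hfd]; rfl
    have hprA : pr A q = ε * 3 * q.1 ^ 2 := by
      have := pr_sub_cube A hAdiff ε q
      rw [hBdef] at hprB0
      rw [hprB0] at this
      linarith [this]
    have hprAcd : ContDiff ℝ 1 (pr A) := by
      unfold pr
      exact (hA.fderiv_right (by norm_num)).clm_apply contDiff_const
    have h2r : 0 ≤ prr B q := aux_2nd B hBcd q (1, 0) hlocmin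
    have h2z : 0 ≤ pzz B q := aux_2nd B hBcd q (0, 1) hlocmin
    -- express prr B and pzz B in terms of A
    have hprfun : pr B = fun p' => pr A p' - ε * 3 * p'.1 ^ 2 := by
      funext p'
      rw [hBdef]
      exact pr_sub_cube A hAdiff ε p'
    have hprrB : prr B q = prr A q - ε * 3 * (2 * q.1) := by
      have h1 : prr B q = fderiv ℝ (fun p' => pr A p' - ε * 3 * p'.1 ^ 2) q (1, 0) := by
        unfold prr
        rw [hprfun]
        rfl
      rw [h1, fderiv_fun_sub ((hprAcd.differentiable one_ne_zero) q)
        (hasFDerivAt_sq (ε * 3) q).differentiableAt, (hasFDerivAt_sq (ε * 3) q).fderiv]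
      have h2 : prr A q = fderiv ℝ (pr A) q (1, 0) := rfl
      rw [h2]
      simp
    have hpzfun : pz B = pz A := by
      funext p'
      rw [hBdef]
      exact pz_sub_cube A hAdiff ε p'
    have hpzzB : pzz B q = pzz A q := by
      unfold pzz
      rw [hpzfun]
    rw [hprrB] at h2r
    rw [hpzzB] at h2z
    have hpde := heq q hq1pos
    have hrhs : -16 * Real.pi * G * q.1 ^ 2 * ρ0 q * v0 q ≤ 0 := by
      have hpi := Real.pi_pos
      have h1 := hρ0 q
      have h2 := hv0 q
      have : 0 ≤ 16 * Real.pi * G * q.1 ^ 2 * ρ0 q * v0 q := by positivity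
      linarith
    have hinv1 : (1 / q.1) * pr A q = 3 * ε * q.1 := by
      rw [hprA]; field_simp
    have hinv2 : (2 / q.1) * pr A q = 6 * ε * q.1 := by
      rw [hprA]; field_simp; ring
    rw [hinv1, hinv2] at hpde
    have hεr : 0 < ε * q.1 := mul_pos hε hq1pos
    nlinarith [hpde, h2r, h2z, hrhs, hεr]
  · -- boundary of the big ball: A q is close to 0, contradiction
    have hqnotK0 : q ∉ K0 := by
      intro hqK0
      have : q ∈ Metric.ball (0 : ℝ × ℝ) R := hsubball (Set.mem_insert_of_mem p hqK0)
      rw [mem_ball_zero_iff] at this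
      rw [heqR] at this
      exact lt_irrefl R this
    have hqA : |A q| < -m / 2 := by
      have := hK0sub hqnotK0
      simpa [Real.norm_eq_abs] using this
    have hAq : m / 2 < A q := by
      rcases abs_lt.mp hqA with ⟨h1, _⟩
      linarith
    have hq1R : q.1 ≤ R := by
      calc q.1 ≤ |q.1| := le_abs_self q.1
      _ = ‖q.1‖ := (Real.norm_eq_abs q.1).symm
      _ ≤ ‖q‖ := norm_fst_le q
      _ = R := heqR
    have hcube : ε * q.1 ^ 3 ≤ -m / 4 := by
      have h3 : q.1 ^ 3 ≤ R ^ 3 := pow_le_pow_left₀ hqK.1 hq1R 3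
      have : ε * q.1 ^ 3 ≤ ε * R ^ 3 := by nlinarith
      linarith
    have : m / 2 - (-m / 4) < B q := by
      rw [hBdef]
      simp only
      linarith
    nlinarith [hBqm, this, hm0]
end
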